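/- Let I ⊆ {1,…,n} be an arbitrary subset of modified vertices and J = S \ {s_i : i ∈ I}. The Modified Kostant Game with active set I terminates in a unique final configuration c_final, and the total number of chips in this final configuration satisfies |c_final| = Σ_{γ^∨ ∈ (Φ^∨)^+ \ (Φ_J^∨)^+} ht_I(γ^∨), where the sum is over all positive coroots of Φ that do not lie in the coroot subsystem generated by {α_j^∨ : s_j ∈ J}. -/

import Mathlib

open scoped Classical RealInnerProductSpace

noncomputable section

variable {n d : ℕ}

/-- The pairing `⟨β, γ^∨⟩ = 2(β,γ)/(γ,γ)` of a vector with a coroot. -/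
def rsPair (β γ : EuclideanSpace ℝ (Fin d)) : ℝ := 2 * ⟪β, γ⟫ / ⟪γ, γ⟫

/-- The coroot `γ^∨ = 2γ/(γ,γ)`. -/
def rsCoroot (γ : EuclideanSpace ℝ (Fin d)) : EuclideanSpace ℝ (Fin d) :=
  (2 / ⟪γ, γ⟫) • γ

/-- `⟨·, γ^∨⟩` as a linear functional. -/
def corootForm (γ : EuclideanSpace ℝ (Fin d)) : EuclideanSpace ℝ (Fin d) →ₗ[ℝ] ℝ where
  toFun x := 2 * ⟪x, γ⟫ / ⟪γ, γ⟫
  map_add' x y := by simp only [inner_add_left]; ring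
  map_smul' c x := by simp only [real_inner_smul_left, RingHom.id_apply, smul_eq_mul]; ring

/-- A finite reduced crystallographic root system in the Euclidean space `ℝ^d`, together with a
chosen base of simple roots `α 0, …, α (n-1)`: every root is an integral linear combination of
the simple roots with all coefficients nonnegative or all nonpositive. -/
structure RootSystemBase (n d : ℕ) : Type where
  Φ : Finset (EuclideanSpace ℝ (Fin d))
  α : Fin n → EuclideanSpace ℝ (Fin d)
  α_mem : ∀ i, α i ∈ Φ
  nonzero : ∀ β ∈ Φ, β ≠ 0
  reduced : ∀ β ∈ Φ, ∀ t : ℝ, t • β ∈ Φ → t = 1 ∨ t = -1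
  crystallographic : ∀ β ∈ Φ, ∀ γ ∈ Φ, ∃ k : ℤ, rsPair β γ = (k : ℝ)
  reflClosed : ∀ β ∈ Φ, ∀ γ ∈ Φ, β - rsPair β γ • γ ∈ Φ
  indep : LinearIndependent ℝ α
  base : ∀ β ∈ Φ, ∃ c : Fin n → ℤ,
    β = ∑ i, (c i : ℝ) • α i ∧ ((∀ i, 0 ≤ c i) ∨ (∀ i, c i ≤ 0))

/-- The extended space `E' = E ⊕ ℝ^I`. -/
abbrev ExtSp (n d : ℕ) (I : Finset (Fin n)) : Type :=
  EuclideanSpace ℝ (Fin d) × ({p : Fin n // p ∈ I} → ℝ)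

/-- The total source vector `β = ∑_{p ∈ I} β_p` in the extended space. -/
def betaVec (n d : ℕ) (I : Finset (Fin n)) : ExtSp n d I := (0, fun _ => 1)

namespace RootSystemBase

variable (R : RootSystemBase n d)

lemma alpha_ne_zero (i : Fin n) : R.α i ≠ 0 := R.nonzero _ (R.α_mem i)

lemma inner_alpha_ne_zero (i : Fin n) : ⟪R.α i, R.α i⟫ ≠ 0 := fun h =>
  R.alpha_ne_zero i ((inner_self_eq_zero (𝕜 := ℝ)).mp h)

lemma corootForm_alpha_self (i : Fin n) : corootForm (R.α i) (R.α i) = 2 := by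
  have h2 := R.inner_alpha_ne_zero i
  show 2 * ⟪R.α i, R.α i⟫ / ⟪R.α i, R.α i⟫ = 2
  rw [mul_div_assoc, div_self h2, mul_one]

/-- The simple reflection `s_i : x ↦ x - ⟨x, α_i^∨⟩ α_i` as a linear automorphism of `E`. -/
def sRefl (i : Fin n) :
    EuclideanSpace ℝ (Fin d) ≃ₗ[ℝ] EuclideanSpace ℝ (Fin d) :=
  Module.reflection (R.corootForm_alpha_self i)

/-- The Weyl group `W`, as the subgroup of linear automorphisms of `E` generated by the
simple reflections. -/
def weyl : Subgroup (EuclideanSpace ℝ (Fin d) ≃ₗ[ℝ] EuclideanSpace ℝ (Fin d)) :=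
  Subgroup.closure (Set.range R.sRefl)

/-- `wordProd [i₁, …, i_t] = s_{i₁} ⋯ s_{i_t}`. -/
def wordProd (l : List (Fin n)) :
    EuclideanSpace ℝ (Fin d) ≃ₗ[ℝ] EuclideanSpace ℝ (Fin d) :=
  (l.map R.sRefl).prod

/-- The Weyl group element `s_{i_t} ⋯ s_{i_1}` associated to the firing sequence
`(i_1, …, i_t)`. -/
def seqProd (l : List (Fin n)) :
    EuclideanSpace ℝ (Fin d) ≃ₗ[ℝ] EuclideanSpace ℝ (Fin d) :=
  (l.reverse.map R.sRefl).prod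

/-- The length function `ℓ` of the Coxeter system `(W, S)`: the minimal number of simple
reflections needed to express `w`. -/
def len (w : EuclideanSpace ℝ (Fin d) ≃ₗ[ℝ] EuclideanSpace ℝ (Fin d)) : ℕ :=
  sInf {t | ∃ l : List (Fin n), l.length = t ∧ R.wordProd l = w}

/-- The set `W^J` of minimal length representatives of `W/W_J`, for `J = S \ {s_i : i ∈ I}`:
those `w ∈ W` with `ℓ(w s_j) > ℓ(w)` for all `j ∉ I`. -/
def minReps (I : Finset (Fin n)) :
    Set (EuclideanSpace ℝ (Fin d) ≃ₗ[ℝ] EuclideanSpace ℝ (Fin d)) :=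
  {w | w ∈ R.weyl ∧ ∀ j, j ∉ I → R.len w < R.len (w * R.sRefl j)}

/-- The Cartan matrix `a_{uv} = ⟨α_u, α_v^∨⟩` (an integer by crystallinity). -/
def cartan (u v : Fin n) : ℤ := ⌊rsPair (R.α u) (R.α v)⌋

/-- The set `Φ⁺` of positive roots. -/
def posRoots : Finset (EuclideanSpace ℝ (Fin d)) :=
  R.Φ.filter fun β => ∃ c : Fin n → ℤ, β = ∑ i, (c i : ℝ) • R.α i ∧ ∀ i, 0 ≤ c i

/-- The set `Φ_P⁺` of positive roots lying in the span of the simple roots `α_j`, `j ∈ P`. -/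
def parPos (P : Finset (Fin n)) : Finset (EuclideanSpace ℝ (Fin d)) :=
  R.posRoots.filter fun β => β ∈ Submodule.span ℝ (R.α '' (P : Set (Fin n)))

/-- `∑_{u ≠ v} (−a_{uv}) c_u + [v ∈ I]`. -/
def chipBound (I : Finset (Fin n)) (c : Fin n → ℤ) (v : Fin n) : ℤ :=
  (∑ u ∈ Finset.univ.erase v, -(R.cartan u v) * c u) + (if v ∈ I then 1 else 0)

/-- Vertex `v` is sad in the configuration `c` (Modified Kostant Game with active set `I`). -/
def Sad (I : Finset (Fin n)) (c : Fin n → ℤ) (v : Fin n) : Prop :=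
  2 * c v < R.chipBound I c v

/-- Firing vertex `v`. -/
def fire (I : Finset (Fin n)) (c : Fin n → ℤ) (v : Fin n) : Fin n → ℤ :=
  Function.update c v (R.chipBound I c v - c v)

end RootSystemBase

/-- `ValidFrom R I c l`: starting from the configuration `c`, the sequence `l` fires a sad
vertex at each step. -/
def RootSystemBase.ValidFrom (R : RootSystemBase n d) (I : Finset (Fin n)) :
    (Fin n → ℤ) → List (Fin n) → Prop
  | _, [] => True
  | c, v :: l => R.Sad I c v ∧ RootSystemBase.ValidFrom R I (R.fire I c v) l

namespace RootSystemBase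

variable (R : RootSystemBase n d)

/-- A valid firing sequence: starts at the zero configuration and fires a sad vertex at
each step. -/
def Valid (I : Finset (Fin n)) (l : List (Fin n)) : Prop := R.ValidFrom I 0 l

/-- The configuration reached after playing the sequence `l` from the zero configuration. -/
def play (I : Finset (Fin n)) (l : List (Fin n)) : Fin n → ℤ :=
  l.foldl (R.fire I) 0

/-- A maximal valid firing sequence: no vertex is sad in the final configuration. -/
def MaximalSeq (I : Finset (Fin n)) (l : List (Fin n)) : Prop :=
  R.Valid I l ∧ ∀ v, ¬ R.Sad I (R.play I l) v

/-- The (integer) coefficients of a vector in the basis of simple coroots, when they exist. -/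
def corootCoeffs (x : EuclideanSpace ℝ (Fin d)) : Fin n → ℤ :=
  if h : ∃ k : Fin n → ℤ, x = ∑ j, (k j : ℝ) • rsCoroot (R.α j) then h.choose else 0

/-- The `I`-height of a (co)vector: the sum over `j ∈ I` of its coefficients in the basis
of simple coroots. -/
def htI (I : Finset (Fin n)) (x : EuclideanSpace ℝ (Fin d)) : ℤ :=
  ∑ j ∈ I, R.corootCoeffs x j

end RootSystemBase

/-- The extended pairing `⟨·, α_i^∨⟩` on `E' = E ⊕ ℝ^I`, determined by
`⟨β_p, α_i^∨⟩ = −δ_{pi}`, as a linear functional. -/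
def extForm (R : RootSystemBase n d) (I : Finset (Fin n)) (i : Fin n) :
    ExtSp n d I →ₗ[ℝ] ℝ :=
  (corootForm (R.α i)).comp (LinearMap.fst ℝ _ _) -
    (if h : i ∈ I then
      (LinearMap.proj (R := ℝ) (φ := fun _ : {p : Fin n // p ∈ I} => ℝ) ⟨i, h⟩).comp
        (LinearMap.snd ℝ _ _)
    else 0)

namespace RootSystemBase

variable (R : RootSystemBase n d)

lemma extForm_apply (I : Finset (Fin n)) (i : Fin n) (x : ExtSp n d I) :
    extForm R I i x = corootForm (R.α i) x.1 - (if h : i ∈ I then x.2 ⟨i, h⟩ else 0) := by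
  by_cases h : i ∈ I <;> simp [extForm, h]

lemma extForm_alpha (I : Finset (Fin n)) (i : Fin n) :
    extForm R I i ((R.α i, 0) : ExtSp n d I) = 2 := by
  rw [R.extForm_apply]
  simp [R.corootForm_alpha_self i]

/-- The simple reflection `s_i : x ↦ x − ⟨x, α_i^∨⟩ α_i` on the extended space `E'`. -/
def extRefl (I : Finset (Fin n)) (i : Fin n) : ExtSp n d I ≃ₗ[ℝ] ExtSp n d I :=
  Module.reflection (R.extForm_alpha I i)

/-- The extended pairing `⟨x, α_i^∨⟩` for `x ∈ E'`. -/
def extPair (I : Finset (Fin n)) (x : ExtSp n d I) (i : Fin n) : ℝ := extForm R I i x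

/-- The action of `s_{i_t} ⋯ s_{i_1}` on the extended space `E'`. -/
def extSeqProd (I : Finset (Fin n)) (l : List (Fin n)) : ExtSp n d I ≃ₗ[ℝ] ExtSp n d I :=
  (l.reverse.map (R.extRefl I)).prod

end RootSystemBase

namespace RootSystemBase

variable (R : RootSystemBase n d)

local notation "E" => EuclideanSpace ℝ (Fin d)

lemma inner_root_pos {β : E} (hβ : β ∈ R.Φ) : 0 < ⟪β, β⟫ :=
  lt_of_le_of_ne real_inner_self_nonneg
    (fun h => R.nonzero β hβ ((inner_self_eq_zero (𝕜 := ℝ)).mp h.symm))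

lemma rsPair_self {β : E} (hβ : β ∈ R.Φ) : rsPair β β = 2 := by
  have h := (R.inner_root_pos hβ).ne'
  rw [rsPair, mul_div_assoc, div_self h, mul_one]

lemma neg_mem {β : E} (hβ : β ∈ R.Φ) : -β ∈ R.Φ := by
  have h := R.reflClosed β hβ β hβ
  rwa [R.rsPair_self hβ, two_smul, sub_add_cancel_left] at h

lemma rsPair_add_left (x y γ : E) : rsPair (x + y) γ = rsPair x γ + rsPair y γ := by
  unfold rsPair; rw [inner_add_left]; ring

lemma rsPair_smul_left (t : ℝ) (x γ : E) : rsPair (t • x) γ = t * rsPair x γ := by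
  unfold rsPair; rw [real_inner_smul_left]; ring

lemma rsPair_sub_left (x y γ : E) : rsPair (x - y) γ = rsPair x γ - rsPair y γ := by
  unfold rsPair; rw [inner_sub_left]; ring

lemma rsPair_neg_left (x γ : E) : rsPair (-x) γ = - rsPair x γ := by
  unfold rsPair; rw [inner_neg_left]; ring

lemma rsPair_neg_right (x γ : E) : rsPair x (-γ) = - rsPair x γ := by
  unfold rsPair; rw [inner_neg_right, inner_neg_neg]; ring

lemma rsPair_sum_left (s : Finset (Fin n)) (f : Fin n → E) (γ : E) :
    rsPair (∑ i ∈ s, f i) γ = ∑ i ∈ s, rsPair (f i) γ := by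
  unfold rsPair; rw [sum_inner, Finset.mul_sum, Finset.sum_div]

lemma sRefl_apply (i : Fin n) (x : E) :
    R.sRefl i x = x - rsPair x (R.α i) • R.α i := by
  rw [sRefl, Module.reflection_apply]; rfl

lemma sRefl_inner (i : Fin n) (x y : E) : ⟪R.sRefl i x, R.sRefl i y⟫ = ⟪x, y⟫ := by
  have h := (R.inner_root_pos (R.α_mem i)).ne'
  rw [R.sRefl_apply, R.sRefl_apply]
  simp only [inner_sub_left, inner_sub_right, real_inner_smul_left, real_inner_smul_right]
  unfold rsPair
  rw [real_inner_comm (R.α i) y, real_inner_comm (R.α i) x]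
  set A := ⟪R.α i, R.α i⟫ with hA
  set a := ⟪x, R.α i⟫ with ha
  set b := ⟪y, R.α i⟫ with hb
  field_simp
  ring

lemma sRefl_mem {β : E} (hβ : β ∈ R.Φ) (i : Fin n) : R.sRefl i β ∈ R.Φ := by
  rw [R.sRefl_apply]; exact R.reflClosed β hβ (R.α i) (R.α_mem i)

lemma coords_unique {c c' : Fin n → ℝ}
    (h : ∑ i, c i • R.α i = ∑ i, c' i • R.α i) : c = c' := by
  have h2 : ∑ i, (c i - c' i) • R.α i = 0 := by
    simp only [sub_smul, Finset.sum_sub_distrib, h, sub_self]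
  funext i
  have := Fintype.linearIndependent_iff.1 R.indep _ h2 i
  linarith

lemma mem_posRoots_iff {β : E} :
    β ∈ R.posRoots ↔ β ∈ R.Φ ∧
      ∃ c : Fin n → ℤ, β = ∑ i, (c i : ℝ) • R.α i ∧ ∀ i, 0 ≤ c i :=
  Finset.mem_filter

lemma posRoots_mem {β : E} (hβ : β ∈ R.posRoots) : β ∈ R.Φ :=
  (R.mem_posRoots_iff.1 hβ).1

lemma pos_of_coord_pos {β : E} (hβ : β ∈ R.Φ) (t : Fin n → ℝ)
    (hcoord : β = ∑ i, t i • R.α i) (j : Fin n) (hj : 0 < t j) :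
    β ∈ R.posRoots := by
  obtain ⟨c, hc, hsign⟩ := R.base β hβ
  have hct : (fun i => (c i : ℝ)) = t := R.coords_unique (by rw [← hc, ← hcoord])
  rcases hsign with hs | hs
  · exact R.mem_posRoots_iff.2 ⟨hβ, c, hc, hs⟩
  · exfalso
    have h1 : (c j : ℝ) = t j := congrFun hct j
    have h2 : (c j : ℝ) ≤ 0 := by exact_mod_cast hs j
    linarith

lemma pos_of_coords_nonneg {β : E} (hβ : β ∈ R.Φ) (t : Fin n → ℝ)
    (hcoord : β = ∑ i, t i • R.α i) (ht : ∀ i, 0 ≤ t i) :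
    β ∈ R.posRoots := by
  by_cases hz : ∀ j, t j = 0
  · exfalso
    apply R.nonzero β hβ
    rw [hcoord]
    exact Finset.sum_eq_zero fun i _ => by rw [hz i, zero_smul]
  · push_neg at hz
    obtain ⟨j, hj⟩ := hz
    exact R.pos_of_coord_pos hβ t hcoord j (lt_of_le_of_ne (ht j) (Ne.symm hj))

lemma alpha_pos (i : Fin n) : R.α i ∈ R.posRoots := by
  refine R.mem_posRoots_iff.2 ⟨R.α_mem i, fun j => if j = i then 1 else 0, ?_, ?_⟩
  · rw [Finset.sum_eq_single i]
    · simp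
    · intro b _ hb; simp [hb]
    · simp
  · intro j; by_cases h : j = i <;> simp [h]

lemma pos_or_neg_pos {β : E} (hβ : β ∈ R.Φ) :
    β ∈ R.posRoots ∨ -β ∈ R.posRoots := by
  obtain ⟨c, hc, hsign⟩ := R.base β hβ
  rcases hsign with hs | hs
  · exact Or.inl (R.mem_posRoots_iff.2 ⟨hβ, c, hc, hs⟩)
  · refine Or.inr (R.mem_posRoots_iff.2 ⟨R.neg_mem hβ, fun i => -c i, ?_, fun i => by simpa using hs i⟩)
    rw [hc, ← Finset.sum_neg_distrib]
    exact Finset.sum_congr rfl fun i _ => by push_cast; rw [neg_smul]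

lemma not_pos_and_neg {β : E} (h1 : β ∈ R.posRoots) (h2 : -β ∈ R.posRoots) : False := by
  obtain ⟨hβ, c, hc, hcpos⟩ := R.mem_posRoots_iff.1 h1
  obtain ⟨_, c', hc', hcpos'⟩ := R.mem_posRoots_iff.1 h2
  have hsum : ∑ i, ((c i : ℝ) + (c' i : ℝ)) • R.α i = ∑ i, (0 : ℝ) • R.α i := by
    simp only [add_smul, Finset.sum_add_distrib, ← hc, ← hc', zero_smul,
      Finset.sum_const_zero, add_neg_cancel]
  have hz := congrFun (R.coords_unique hsum)
  apply R.nonzero β hβ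
  rw [hc]
  refine Finset.sum_eq_zero fun i _ => ?_
  have h2' : (0:ℝ) ≤ (c' i : ℝ) := by exact_mod_cast hcpos' i
  have h1' : (0:ℝ) ≤ (c i : ℝ) := by exact_mod_cast hcpos i
  have := hz i
  have : (c i : ℝ) = 0 := by linarith
  rw [this, zero_smul]

lemma neg_not_pos {β : E} (h1 : β ∈ R.posRoots) : -β ∉ R.posRoots :=
  fun h2 => R.not_pos_and_neg h1 h2

lemma pos_of_not_pos {β : E} (hβ : β ∈ R.Φ) (h : β ∉ R.posRoots) : -β ∈ R.posRoots :=
  (R.pos_or_neg_pos hβ).resolve_left h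

end RootSystemBase
namespace RootSystemBase

variable (R : RootSystemBase n d)

local notation "E" => EuclideanSpace ℝ (Fin d)

lemma sRefl_alpha (i : Fin n) : R.sRefl i (R.α i) = -(R.α i) := by
  rw [R.sRefl_apply, R.rsPair_self (R.α_mem i), two_smul]
  abel

lemma sRefl_sq (i : Fin n) : R.sRefl i * R.sRefl i = 1 := by
  apply LinearEquiv.ext
  intro x
  exact Module.involutive_reflection (R.corootForm_alpha_self i) x

@[simp] lemma wordProd_nil : R.wordProd [] = 1 := rfl

lemma wordProd_cons (i : Fin n) (l : List (Fin n)) :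
    R.wordProd (i :: l) = R.sRefl i * R.wordProd l := by
  rw [wordProd, wordProd, List.map_cons, List.prod_cons]

lemma wordProd_append (l₁ l₂ : List (Fin n)) :
    R.wordProd (l₁ ++ l₂) = R.wordProd l₁ * R.wordProd l₂ := by
  rw [wordProd, wordProd, wordProd, List.map_append, List.prod_append]

lemma mul_apply (u v : E ≃ₗ[ℝ] E) (x : E) : (u * v) x = u (v x) := rfl

lemma wordProd_mem {β : E} (hβ : β ∈ R.Φ) (l : List (Fin n)) :
    R.wordProd l β ∈ R.Φ := by
  induction l with
  | nil => simpa using hβ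
  | cons i l ih => rw [R.wordProd_cons, mul_apply]; exact R.sRefl_mem ih i

lemma wordProd_inner (l : List (Fin n)) (x y : E) :
    ⟪R.wordProd l x, R.wordProd l y⟫ = ⟪x, y⟫ := by
  induction l with
  | nil => rfl
  | cons i l ih => rw [R.wordProd_cons, mul_apply, mul_apply, R.sRefl_inner, ih]

lemma wordProd_rsPair (l : List (Fin n)) (x γ : E) :
    rsPair (R.wordProd l x) (R.wordProd l γ) = rsPair x γ := by
  unfold rsPair
  rw [R.wordProd_inner, R.wordProd_inner]

lemma wordProd_reverse (l : List (Fin n)) :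
    R.wordProd l.reverse * R.wordProd l = 1 := by
  induction l with
  | nil => simp
  | cons i l ih =>
      rw [List.reverse_cons, R.wordProd_append, R.wordProd_cons]
      calc R.wordProd l.reverse * R.wordProd [i] * (R.sRefl i * R.wordProd l)
          = R.wordProd l.reverse * (R.wordProd [i] * R.sRefl i) * R.wordProd l := by
            rw [mul_assoc, mul_assoc, mul_assoc]
        _ = 1 := by
            have : R.wordProd [i] = R.sRefl i := by
              rw [R.wordProd_cons, R.wordProd_nil, mul_one]
            rw [this, R.sRefl_sq, mul_one, ih]

lemma wordProd_inv (l : List (Fin n)) : (R.wordProd l)⁻¹ = R.wordProd l.reverse :=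
  (inv_eq_of_mul_eq_one_left (R.wordProd_reverse l))

lemma inv_apply (u : E ≃ₗ[ℝ] E) (x : E) : u⁻¹ x = u.symm x := rfl

lemma symm_wordProd (l : List (Fin n)) (x : E) :
    (R.wordProd l).symm x = R.wordProd l.reverse x := by
  rw [← inv_apply, R.wordProd_inv]

/-- `s_i` maps positive roots other than `α i` to positive roots. -/
lemma sRefl_pos {γ : E} (hγ : γ ∈ R.posRoots) (i : Fin n) (hne : γ ≠ R.α i) :
    R.sRefl i γ ∈ R.posRoots := by
  obtain ⟨hmem, c, hc, hcpos⟩ := R.mem_posRoots_iff.1 hγ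
  -- there is j ≠ i with c j > 0
  have hexj : ∃ j, j ≠ i ∧ 0 < c j := by
    by_contra hcon
    push_neg at hcon
    have hzero : ∀ j, j ≠ i → c j = 0 := fun j hj => le_antisymm (hcon j hj) (hcpos j)
    have hγi : γ = ((c i : ℝ)) • R.α i := by
      rw [hc, Finset.sum_eq_single i]
      · intro b _ hb; rw [hzero b hb]; simp
      · simp
    rcases R.reduced (R.α i) (R.α_mem i) (c i : ℝ) (by rw [← hγi]; exact hmem) with h1 | h1
    · exact hne (by rw [hγi, h1, one_smul])
    · have : (0:ℝ) ≤ (c i : ℝ) := by exact_mod_cast hcpos i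
      rw [h1] at this; linarith
  obtain ⟨j, hji, hjpos⟩ := hexj
  have hcoord : R.sRefl i γ =
      ∑ m, ((c m : ℝ) - if m = i then rsPair γ (R.α i) else 0) • R.α m := by
    have hsplit : ∑ m, ((c m : ℝ) - if m = i then rsPair γ (R.α i) else 0) • R.α m
        = (∑ m, (c m : ℝ) • R.α m) - ∑ m, (if m = i then rsPair γ (R.α i) else 0) • R.α m := by
      rw [← Finset.sum_sub_distrib]
      exact Finset.sum_congr rfl fun m _ => sub_smul _ _ _
    have hione : ∑ m, (if m = i then rsPair γ (R.α i) else 0) • R.α m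
        = rsPair γ (R.α i) • R.α i := by
      rw [Finset.sum_eq_single i]
      · rw [if_pos rfl]
      · intro b _ hb; rw [if_neg hb, zero_smul]
      · intro h; exact absurd (Finset.mem_univ i) h
    rw [R.sRefl_apply, hsplit, hione, ← hc]
  refine R.pos_of_coord_pos (R.sRefl_mem hmem i) _ hcoord j ?_
  rw [if_neg hji]
  have : (0:ℝ) < (c j : ℝ) := by exact_mod_cast hjpos
  linarith

lemma eq_alpha_of_flip {γ : E} (hγ : γ ∈ R.posRoots) (i : Fin n)
    (h : R.sRefl i γ ∉ R.posRoots) : γ = R.α i := by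
  by_contra hne
  exact h (R.sRefl_pos hγ i hne)

/-- A root-preserving linear automorphism sending all simple roots to positive roots
preserves positive roots. -/
lemma pos_of_alpha_pos (w : E ≃ₗ[ℝ] E) (hroot : ∀ β ∈ R.Φ, w β ∈ R.Φ)
    (halpha : ∀ i, w (R.α i) ∈ R.posRoots) {γ : E} (hγ : γ ∈ R.posRoots) :
    w γ ∈ R.posRoots := by
  obtain ⟨hmem, c, hc, hcpos⟩ := R.mem_posRoots_iff.1 hγ
  have h := fun i => (R.mem_posRoots_iff.1 (halpha i)).2
  choose b hb hbpos using h
  have hcoord : w γ = ∑ m, (∑ i, (c i : ℝ) * (b i m : ℝ)) • R.α m := by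
    rw [hc, map_sum]
    have : ∀ i, w ((c i : ℝ) • R.α i) = ∑ m, ((c i : ℝ) * (b i m : ℝ)) • R.α m := by
      intro i
      rw [map_smul, hb i, Finset.smul_sum]
      exact Finset.sum_congr rfl fun m _ => by rw [smul_smul]
    rw [Finset.sum_congr rfl fun i _ => this i, Finset.sum_comm]
    exact Finset.sum_congr rfl fun m _ => by rw [Finset.sum_smul]
  refine R.pos_of_coords_nonneg (hroot γ hmem) _ hcoord fun m => ?_
  refine Finset.sum_nonneg fun i _ => mul_nonneg ?_ ?_
  · exact_mod_cast hcpos i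
  · exact_mod_cast hbpos i m

/-- Locating the positivity flip along a word. -/
lemma flip_point : ∀ (l : List (Fin n)) (γ : E), γ ∈ R.posRoots →
    R.wordProd l γ ∉ R.posRoots →
    ∃ (l₁ : List (Fin n)) (j : Fin n) (l₂ : List (Fin n)),
      l = l₁ ++ j :: l₂ ∧ R.wordProd l₂ γ = R.α j := by
  intro l
  induction l with
  | nil => intro γ hγ hbad; exact absurd hγ hbad
  | cons i l ih =>
      intro γ hγ hbad
      rw [R.wordProd_cons, mul_apply] at hbad
      by_cases hcase : R.wordProd l γ ∈ R.posRoots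
      · exact ⟨[], i, l, rfl, R.eq_alpha_of_flip hcase i hbad⟩
      · obtain ⟨l₁, j, l₂, hdec, hj⟩ := ih γ hγ hcase
        exact ⟨i :: l₁, j, l₂, by rw [hdec]; rfl, hj⟩

/-- Conjugation: if `u(α i) = α j` for a word `u`, then `s_j u = u s_i`. -/
lemma conj_refl (m : List (Fin n)) (i j : Fin n) (h : R.wordProd m (R.α i) = R.α j) :
    R.sRefl j * R.wordProd m = R.wordProd m * R.sRefl i := by
  apply LinearEquiv.ext
  intro x
  rw [mul_apply, mul_apply, R.sRefl_apply, R.sRefl_apply, map_sub, map_smul]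
  have hpair : rsPair (R.wordProd m x) (R.α j) = rsPair x (R.α i) := by
    rw [← h, R.wordProd_rsPair]
  rw [hpair, h]

end RootSystemBase
namespace RootSystemBase

variable (R : RootSystemBase n d)

local notation "E" => EuclideanSpace ℝ (Fin d)

/-- A word that preserves the positive roots is the identity (deletion argument). -/
lemma eq_one_of_pos_preserving :
    ∀ (N : ℕ) (l : List (Fin n)), l.length ≤ N →
      (∀ γ ∈ R.posRoots, R.wordProd l γ ∈ R.posRoots) → R.wordProd l = 1 := by
  intro N
  induction N with
  | zero =>
      intro l hl _
      rw [List.length_eq_zero_iff.1 (Nat.le_zero.1 hl)]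
      exact R.wordProd_nil
  | succ N ih =>
      intro l hl hpos
      rcases List.eq_nil_or_concat l with rfl | ⟨l', i, rfl⟩
      · exact R.wordProd_nil
      · simp only [List.concat_eq_append] at hl hpos ⊢
        have hneg : R.wordProd l' (R.α i) ∉ R.posRoots := by
          intro hmem
          have h1 : R.wordProd (l' ++ [i]) (R.α i) = R.wordProd l' (-(R.α i)) := by
            rw [R.wordProd_append, mul_apply]
            congr 1
            rw [R.wordProd_cons, R.wordProd_nil, mul_one, R.sRefl_alpha]
          have h2 := hpos (R.α i) (R.alpha_pos i)
          rw [h1, map_neg] at h2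
          exact R.not_pos_and_neg hmem h2
        obtain ⟨l₁, j, l₂, hdec, hj⟩ := R.flip_point l' (R.α i) (R.alpha_pos i) hneg
        have hconj := R.conj_refl l₂ i j hj
        have e3 : R.wordProd [i] = R.sRefl i := by
          rw [R.wordProd_cons, R.wordProd_nil, mul_one]
        have hshorter : R.wordProd (l' ++ [i]) = R.wordProd (l₁ ++ l₂) := by
          rw [R.wordProd_append, hdec, R.wordProd_append, R.wordProd_cons, e3,
            R.wordProd_append, hconj]
          simp only [mul_assoc]
          rw [R.sRefl_sq, mul_one]
        rw [hshorter]
        apply ih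
        · have : (l' ++ [i]).length ≤ N + 1 := hl
          rw [hdec] at this
          simp only [List.length_append, List.length_cons, List.length_append] at this ⊢
          omega
        · intro γ hγ
          rw [← hshorter]
          exact hpos γ hγ

/-- The number of inversions of `w`. -/
def nuW (w : E ≃ₗ[ℝ] E) : ℕ := (R.posRoots.filter (fun γ => w γ ∉ R.posRoots)).card

lemma wordProd_eq_one_of_nu_zero (l : List (Fin n)) (h : R.nuW (R.wordProd l) = 0) :
    R.wordProd l = 1 := by
  apply R.eq_one_of_pos_preserving l.length l le_rfl
  intro γ hγ
  by_contra hbad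
  have : γ ∈ R.posRoots.filter (fun γ => R.wordProd l γ ∉ R.posRoots) :=
    Finset.mem_filter.2 ⟨hγ, hbad⟩
  rw [Finset.card_eq_zero.1 h] at this
  exact absurd this (Finset.notMem_empty γ)

lemma exists_descent (l : List (Fin n)) (h : R.nuW (R.wordProd l) ≠ 0) :
    ∃ i : Fin n, (R.wordProd l).symm (R.α i) ∉ R.posRoots := by
  by_contra hcon
  push_neg at hcon
  apply h
  have hinv : R.wordProd l.reverse = 1 := by
    apply R.eq_one_of_pos_preserving l.reverse.length l.reverse le_rfl
    apply R.pos_of_alpha_pos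
    · intro β hβ; exact R.wordProd_mem hβ l.reverse
    · intro i
      -- wordProd l.reverse = symm
      have := hcon i
      rwa [R.symm_wordProd] at this
  have hone : R.wordProd l = 1 := by
    have h2 : R.wordProd l * R.wordProd l.reverse = 1 := by
      rw [← R.wordProd_inv, mul_inv_cancel]
    rw [hinv, mul_one] at h2
    exact h2
  rw [hone]
  unfold nuW
  rw [Finset.card_eq_zero, Finset.filter_eq_empty_iff]
  intro γ hγ
  exact fun hcon => hcon hγ

lemma nu_decrease (l : List (Fin n)) (i : Fin n)
    (h : (R.wordProd l).symm (R.α i) ∉ R.posRoots) :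
    R.nuW (R.wordProd l) = R.nuW (R.wordProd (i :: l)) + 1 := by
  set u := R.wordProd l with hu
  set γ₀ : E := -(u.symm (R.α i)) with hγ₀
  have hγ₀root : u.symm (R.α i) ∈ R.Φ := by
    have : R.wordProd l.reverse (R.α i) ∈ R.Φ := R.wordProd_mem (R.α_mem i) l.reverse
    rwa [← R.symm_wordProd] at this
  have hγ₀pos : γ₀ ∈ R.posRoots := R.pos_of_not_pos hγ₀root h
  have huγ₀ : u γ₀ = -(R.α i) := by
    rw [hγ₀, map_neg, u.apply_symm_apply]
  have hset : R.posRoots.filter (fun γ => R.wordProd (i :: l) γ ∉ R.posRoots)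
      = (R.posRoots.filter (fun γ => u γ ∉ R.posRoots)).erase γ₀ := by
    ext γ
    rw [Finset.mem_erase, Finset.mem_filter, Finset.mem_filter]
    constructor
    · rintro ⟨hγ, hbad⟩
      rw [R.wordProd_cons, mul_apply] at hbad
      have hγroot : γ ∈ R.Φ := R.posRoots_mem hγ
      have huγroot : u γ ∈ R.Φ := R.wordProd_mem hγroot l
      by_cases hc1 : u γ ∈ R.posRoots
      · -- then s_i (u γ) ∉ pos forces u γ = α i, i.e. γ = symm α i ∉ pos, contradiction
        exfalso
        have := R.eq_alpha_of_flip hc1 i hbad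
        have hγeq : γ = u.symm (R.α i) := by
          rw [← this, u.symm_apply_apply]
        rw [hγeq] at hγ
        exact h hγ
      · refine ⟨?_, hγ, hc1⟩
        intro hγeq
        rw [hγeq, huγ₀] at hbad
        apply hbad
        rw [R.sRefl_apply, rsPair_neg_left, R.rsPair_self (R.α_mem i)]
        have : -(R.α i) - (-2 : ℝ) • R.α i = R.α i := by
          rw [neg_smul, sub_neg_eq_add, two_smul]; abel
        rw [this]
        exact R.alpha_pos i
    · rintro ⟨hne, hγ, hbad⟩
      refine ⟨hγ, ?_⟩
      rw [R.wordProd_cons, mul_apply]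
      intro hcon2
      -- s_i (u γ) ∈ pos with u γ ∉ pos
      have hγroot : γ ∈ R.Φ := R.posRoots_mem hγ
      have huγroot : u γ ∈ R.Φ := R.wordProd_mem hγroot l
      have hnegpos : -(u γ) ∈ R.posRoots := R.pos_of_not_pos huγroot hbad
      by_cases hc2 : -(u γ) = R.α i
      · -- then u γ = -α i so γ = γ₀; contradiction with hne
        apply hne
        have : u γ = u γ₀ := by rw [huγ₀, ← hc2]; abel
        exact u.injective this
      · have : R.sRefl i (-(u γ)) ∈ R.posRoots := R.sRefl_pos hnegpos i hc2
        rw [map_neg] at this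
        exact R.not_pos_and_neg hcon2 this
  have hγ₀mem : γ₀ ∈ R.posRoots.filter (fun γ => u γ ∉ R.posRoots) := by
    refine Finset.mem_filter.2 ⟨hγ₀pos, ?_⟩
    rw [huγ₀]
    intro hcon3
    exact R.not_pos_and_neg (R.alpha_pos i) hcon3
  unfold nuW
  rw [hset, Finset.card_erase_of_mem hγ₀mem]
  have : 0 < (R.posRoots.filter (fun γ => u γ ∉ R.posRoots)).card :=
    Finset.card_pos.2 ⟨γ₀, hγ₀mem⟩
  omega

/-- The cone of nonnegative combinations of simple roots. -/
def InCone (x : E) : Prop := ∃ t : Fin n → ℝ, (∀ i, 0 ≤ t i) ∧ x = ∑ i, t i • R.α i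

lemma inCone_zero : R.InCone 0 :=
  ⟨fun _ => 0, fun _ => le_rfl, by simp⟩

lemma inCone_add_smul {x : E} (hx : R.InCone x) (a : ℝ) (ha : 0 ≤ a) (i : Fin n) :
    R.InCone (x + a • R.α i) := by
  obtain ⟨t, ht, hxt⟩ := hx
  refine ⟨fun m => t m + if m = i then a else 0, fun m => ?_, ?_⟩
  · dsimp only
    split_ifs with h
    · exact add_nonneg (ht m) ha
    · simpa using ht m
  have : ∑ m, (t m + if m = i then a else 0) • R.α m
      = (∑ m, t m • R.α m) + ∑ m, (if m = i then a else 0) • R.α m := by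
    rw [← Finset.sum_add_distrib]
    exact Finset.sum_congr rfl fun m _ => add_smul _ _ _
  rw [this, ← hxt]
  congr 1
  rw [Finset.sum_eq_single i]
  · rw [if_pos rfl]
  · intro b _ hb; rw [if_neg hb, zero_smul]
  · intro hcon; exact absurd (Finset.mem_univ i) hcon

lemma inCone_antisymm {x : E} (h1 : R.InCone x) (h2 : R.InCone (-x)) : x = 0 := by
  obtain ⟨t, ht, hxt⟩ := h1
  obtain ⟨s, hs, hxs⟩ := h2
  have hsum : ∑ i, (t i + s i) • R.α i = ∑ i, (0:ℝ) • R.α i := by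
    have e : ∑ i, (t i + s i) • R.α i = (∑ i, t i • R.α i) + ∑ i, s i • R.α i := by
      rw [← Finset.sum_add_distrib]
      exact Finset.sum_congr rfl fun i _ => add_smul _ _ _
    rw [e, ← hxt, ← hxs]
    simp
  have := congrFun (R.coords_unique hsum)
  rw [hxt]
  refine Finset.sum_eq_zero fun i _ => ?_
  have hti : t i = 0 := by have h := this i; linarith [ht i, hs i]
  rw [hti, zero_smul]

/-- A vector dominant on the simple roots pairs nonnegatively with every positive root. -/
lemma pair_nonneg_of_dominant {lam : E} (hdom : ∀ i, 0 ≤ rsPair lam (R.α i))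
    {γ : E} (hγ : γ ∈ R.posRoots) : 0 ≤ rsPair lam γ := by
  obtain ⟨hmem, c, hc, hcpos⟩ := R.mem_posRoots_iff.1 hγ
  have hinner : 0 ≤ ⟪lam, γ⟫ := by
    rw [hc, inner_sum]
    refine Finset.sum_nonneg fun i _ => ?_
    rw [real_inner_smul_right]
    refine mul_nonneg (by exact_mod_cast hcpos i) ?_
    have h2 := hdom i
    unfold rsPair at h2
    have hαα := R.inner_root_pos (R.α_mem i)
    by_contra hcon
    push_neg at hcon
    have : 2 * ⟪lam, R.α i⟫ / ⟪R.α i, R.α i⟫ < 0 := div_neg_of_neg_of_pos (by linarith) hαα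
    linarith
  unfold rsPair
  have hγγ := R.inner_root_pos hmem
  exact div_nonneg (by linarith) (le_of_lt hγγ)

/-- The cone lemma: for dominant `lam`, `lam - w lam` lies in the cone over simple roots. -/
lemma dominant_cone (lam : E) (hdom : ∀ i, 0 ≤ rsPair lam (R.α i)) :
    ∀ (N : ℕ) (l : List (Fin n)), R.nuW (R.wordProd l) ≤ N →
      R.InCone (lam - R.wordProd l lam) := by
  intro N
  induction N with
  | zero =>
      intro l hl
      rw [R.wordProd_eq_one_of_nu_zero l (Nat.le_zero.1 hl)]
      simpa using R.inCone_zero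
  | succ N ih =>
      intro l hl
      by_cases hz : R.nuW (R.wordProd l) = 0
      · rw [R.wordProd_eq_one_of_nu_zero l hz]
        simpa using R.inCone_zero
      · obtain ⟨i, hi⟩ := R.exists_descent l hz
        have hdec := R.nu_decrease l i hi
        have hih : R.InCone (lam - R.wordProd (i :: l) lam) := ih _ (by omega)
        have hkey : lam - R.wordProd l lam
            = (lam - R.wordProd (i :: l) lam) + (- rsPair (R.wordProd l lam) (R.α i)) • R.α i := by
          rw [R.wordProd_cons, mul_apply, R.sRefl_apply]
          rw [neg_smul]
          abel
        rw [hkey]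
        refine R.inCone_add_smul hih _ ?_ i
        -- rsPair (w lam) (α i) = rsPair lam (w⁻¹ α i) ≤ 0
        have hui : R.wordProd l ((R.wordProd l).symm (R.α i)) = R.α i :=
          (R.wordProd l).apply_symm_apply _
        have hpair : rsPair (R.wordProd l lam) (R.α i) =
            rsPair lam ((R.wordProd l).symm (R.α i)) := by
          conv_lhs => rw [← hui]
          rw [R.wordProd_rsPair]
        have hroot : (R.wordProd l).symm (R.α i) ∈ R.Φ := by
          have : R.wordProd l.reverse (R.α i) ∈ R.Φ := R.wordProd_mem (R.α_mem i) l.reverse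
          rwa [← R.symm_wordProd] at this
        have hnegpos : -((R.wordProd l).symm (R.α i)) ∈ R.posRoots :=
          R.pos_of_not_pos hroot hi
        have := R.pair_nonneg_of_dominant hdom hnegpos
        rw [rsPair_neg_right] at this
        rw [hpair]
        linarith

end RootSystemBase
namespace RootSystemBase

variable (R : RootSystemBase n d)

local notation "E" => EuclideanSpace ℝ (Fin d)

lemma rsPair_eq_inner_coroot (x γ : E) : rsPair x γ = ⟪x, rsCoroot γ⟫ := by
  unfold rsPair rsCoroot
  rw [real_inner_smul_right]
  ring

lemma sRefl_rsCoroot (i : Fin n) (x : E) :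
    rsCoroot (R.sRefl i x) = R.sRefl i (rsCoroot x) := by
  unfold rsCoroot
  rw [← R.sRefl_inner i x x, map_smul]

lemma wordProd_rsCoroot (l : List (Fin n)) (x : E) :
    rsCoroot (R.wordProd l x) = R.wordProd l (rsCoroot x) := by
  induction l with
  | nil => rfl
  | cons i l ih => rw [R.wordProd_cons, mul_apply, R.sRefl_rsCoroot, ih, mul_apply]

lemma coroot_coords_unique {t t' : Fin n → ℝ}
    (h : ∑ j, t j • rsCoroot (R.α j) = ∑ j, t' j • rsCoroot (R.α j)) : t = t' := by
  have hconv : ∀ (s : Fin n → ℝ), ∑ j, s j • rsCoroot (R.α j)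
      = ∑ j, (s j * (2 / ⟪R.α j, R.α j⟫)) • R.α j := by
    intro s
    refine Finset.sum_congr rfl fun j _ => ?_
    rw [rsCoroot, smul_smul]
  rw [hconv, hconv] at h
  have h2 := congrFun (R.coords_unique h)
  funext j
  have hne : (2 / ⟪R.α j, R.α j⟫) ≠ 0 := by
    have := R.inner_root_pos (R.α_mem j)
    positivity
  exact mul_right_cancel₀ hne (h2 j)

lemma sRefl_coroot_alpha (i j : Fin n) :
    R.sRefl i (rsCoroot (R.α j)) =
      rsCoroot (R.α j) - rsPair (R.α i) (R.α j) • rsCoroot (R.α i) := by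
  rw [R.sRefl_apply]
  congr 1
  unfold rsCoroot rsPair
  rw [real_inner_smul_left, smul_smul, real_inner_comm (R.α j) (R.α i)]
  congr 1
  have h1 := (R.inner_root_pos (R.α_mem i)).ne'
  have h2 := (R.inner_root_pos (R.α_mem j)).ne'
  set A := ⟪R.α i, R.α i⟫
  set B := ⟪R.α j, R.α j⟫
  set C := ⟪R.α i, R.α j⟫
  field_simp

lemma exists_pos_inner {γ : E} (hγ : γ ∈ R.posRoots) :
    ∃ i : Fin n, 0 < rsPair γ (R.α i) := by
  obtain ⟨hmem, c, hc, hcpos⟩ := R.mem_posRoots_iff.1 hγ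
  by_contra hcon
  push_neg at hcon
  have hneg : ∀ i, ⟪γ, R.α i⟫ ≤ 0 := by
    intro i
    have h := hcon i
    unfold rsPair at h
    have hαα := R.inner_root_pos (R.α_mem i)
    by_contra hpos
    push_neg at hpos
    have : 0 < 2 * ⟪γ, R.α i⟫ / ⟪R.α i, R.α i⟫ := div_pos (by linarith) hαα
    linarith
  have : ⟪γ, γ⟫ ≤ 0 := by
    nth_rewrite 1 [hc]
    rw [sum_inner]
    refine Finset.sum_nonpos fun i _ => ?_
    rw [real_inner_smul_left]
    have : (0:ℝ) ≤ (c i : ℝ) := by exact_mod_cast hcpos i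
    rw [real_inner_comm]
    exact mul_nonpos_of_nonneg_of_nonpos this (hneg i)
  linarith [R.inner_root_pos hmem]

/-- Every positive root has an integral expression of its coroot in simple coroots. -/
lemma coroot_int : ∀ (h : ℕ) (γ : E) (c : Fin n → ℤ), γ ∈ R.Φ →
    γ = ∑ j, (c j : ℝ) • R.α j → (∀ j, 0 ≤ c j) → (∑ j, c j) ≤ (h : ℤ) →
    ∃ k : Fin n → ℤ, rsCoroot γ = ∑ j, (k j : ℝ) • rsCoroot (R.α j) := by
  intro h
  induction h with
  | zero =>
      intro γ c hmem hc hcpos hsum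
      exfalso
      have : ∀ j, c j = 0 := by
        intro j
        have h1 : ∑ j, c j ≤ 0 := by exact_mod_cast hsum
        have h2 : ∀ m ∈ Finset.univ, 0 ≤ c m := fun m _ => hcpos m
        have heach : c j ≤ ∑ m, c m := Finset.single_le_sum h2 (Finset.mem_univ j)
        exact le_antisymm (by linarith) (hcpos j)
      apply R.nonzero γ hmem
      rw [hc]
      exact Finset.sum_eq_zero fun j _ => by rw [this j]; simp
  | succ N ih =>
      intro γ c hmem hc hcpos hsum
      have hγpos : γ ∈ R.posRoots := R.mem_posRoots_iff.2 ⟨hmem, c, hc, hcpos⟩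
      by_cases hsimple : ∃ i, γ = R.α i
      · obtain ⟨i, rfl⟩ := hsimple
        refine ⟨fun j => if j = i then 1 else 0, ?_⟩
        rw [Finset.sum_eq_single i]
        · simp
        · intro b _ hb; simp [hb]
        · simp
      · push_neg at hsimple
        obtain ⟨i, hi⟩ := R.exists_pos_inner hγpos
        -- m = rsPair γ (α i) is a positive integer
        obtain ⟨m, hm⟩ := R.crystallographic γ hmem (R.α i) (R.α_mem i)
        have hm1 : 1 ≤ m := by
          have : (0:ℝ) < (m:ℝ) := hm ▸ hi
          exact_mod_cast this
        set δ := R.sRefl i γ with hδ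
        have hδpos : δ ∈ R.posRoots := R.sRefl_pos hγpos i (hsimple i)
        -- coordinates of δ
        have hδcoord : δ = ∑ j, ((c j - if j = i then m else 0 : ℤ) : ℝ) • R.α j := by
          have hsplit : ∑ j, ((c j - if j = i then m else 0 : ℤ) : ℝ) • R.α j
              = (∑ j, (c j : ℝ) • R.α j) - ∑ j, ((if j = i then m else 0 : ℤ) : ℝ) • R.α j := by
            rw [← Finset.sum_sub_distrib]
            refine Finset.sum_congr rfl fun j _ => ?_
            push_cast
            rw [sub_smul]
          have hione : ∑ j, ((if j = i then m else 0 : ℤ) : ℝ) • R.α j = (m : ℝ) • R.α i := by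
            rw [Finset.sum_eq_single i]
            · simp
            · intro b _ hb; simp [hb]
            · simp
          rw [hδ, R.sRefl_apply, hsplit, hione, ← hc, hm]
        obtain ⟨hδmem, c', hc', hc'pos⟩ := R.mem_posRoots_iff.1 hδpos
        have hceq : ∀ j, c' j = c j - if j = i then m else 0 := by
          have huniq : (fun j => ((c' j : ℝ)))
              = (fun j => ((c j - if j = i then m else 0 : ℤ) : ℝ)) :=
            R.coords_unique (by rw [← hc', ← hδcoord])
          intro j
          have h2 := congrFun huniq j
          exact_mod_cast h2
        have hsum' : (∑ j, c' j) ≤ (N : ℤ) := by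
          have e : ∑ j, c' j = (∑ j, c j) - m := by
            rw [Finset.sum_congr rfl fun j _ => hceq j, Finset.sum_sub_distrib]
            congr 1
            rw [Finset.sum_eq_single i]
            · simp
            · intro b _ hb; simp [hb]
            · simp
          rw [e]
          push_cast at hsum ⊢
          omega
        obtain ⟨k', hk'⟩ := ih δ c' hδmem hc' hc'pos hsum'
        -- γ = sRefl i δ
        have hγδ : γ = R.sRefl i δ := by
          rw [hδ]
          have := R.sRefl_sq i
          have h2 : (R.sRefl i * R.sRefl i) γ = γ := by rw [this]; rfl
          rw [mul_apply] at h2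
          exact h2.symm
        -- integers a j with (a j : ℝ) = rsPair (α i) (α j)
        have hcr := fun j => R.crystallographic (R.α i) (R.α_mem i) (R.α j) (R.α_mem j)
        choose a ha using hcr
        have hterm : ∀ j, R.sRefl i ((k' j : ℝ) • rsCoroot (R.α j))
            = (k' j : ℝ) • rsCoroot (R.α j) - ((k' j : ℝ) * (a j : ℝ)) • rsCoroot (R.α i) := by
          intro j
          rw [map_smul, R.sRefl_coroot_alpha, smul_sub, smul_smul, ha j]
        refine ⟨fun j => k' j - if j = i then (∑ p, k' p * a p) else 0, ?_⟩
        have hLHS : rsCoroot γ = (∑ j, (k' j : ℝ) • rsCoroot (R.α j))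
            - ∑ j, ((k' j : ℝ) * (a j : ℝ)) • rsCoroot (R.α i) := by
          rw [hγδ, R.sRefl_rsCoroot, hk', map_sum]
          rw [Finset.sum_congr rfl fun j _ => hterm j, Finset.sum_sub_distrib]
        have hrhs1 : ∑ j, ((if j = i then (∑ p, k' p * a p) else 0 : ℤ) : ℝ) • rsCoroot (R.α j)
            = ((∑ p, k' p * a p : ℤ) : ℝ) • rsCoroot (R.α i) := by
          rw [Finset.sum_eq_single i]
          · rw [if_pos rfl]
          · intro b _ hb; rw [if_neg hb]; simp
          · intro hcon; exact absurd (Finset.mem_univ i) hcon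
        have hrhs2 : ∑ j, ((k' j - if j = i then (∑ p, k' p * a p) else 0 : ℤ) : ℝ) • rsCoroot (R.α j)
            = (∑ j, (k' j : ℝ) • rsCoroot (R.α j))
              - ∑ j, ((if j = i then (∑ p, k' p * a p) else 0 : ℤ) : ℝ) • rsCoroot (R.α j) := by
          rw [← Finset.sum_sub_distrib]
          refine Finset.sum_congr rfl fun j _ => ?_
          push_cast
          rw [sub_smul]
        rw [hLHS, hrhs2, hrhs1]
        congr 1
        rw [← Finset.sum_smul]
        congr 1
        push_cast
        rfl

end RootSystemBase
namespace RootSystemBase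

variable (R : RootSystemBase n d)

local notation "E" => EuclideanSpace ℝ (Fin d)

lemma coroot_real_coords {γ : E} (hγ : γ ∈ R.Φ) (c : Fin n → ℤ)
    (hc : γ = ∑ j, (c j : ℝ) • R.α j) :
    rsCoroot γ = ∑ j, ((c j : ℝ) * ⟪R.α j, R.α j⟫ / ⟪γ, γ⟫) • rsCoroot (R.α j) := by
  unfold rsCoroot
  rw [hc, Finset.smul_sum]
  refine Finset.sum_congr rfl fun j _ => ?_
  rw [smul_smul, smul_smul]
  congr 1
  have h1 := (R.inner_root_pos hγ).ne'
  have h2 := (R.inner_root_pos (R.α_mem j)).ne'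
  rw [← hc]
  set G := ⟪γ, γ⟫
  set A := ⟪R.α j, R.α j⟫
  field_simp

lemma coroot_int' {γ : E} (hγ : γ ∈ R.posRoots) :
    ∃ k : Fin n → ℤ, rsCoroot γ = ∑ j, (k j : ℝ) • rsCoroot (R.α j) := by
  obtain ⟨hmem, c, hc, hcpos⟩ := R.mem_posRoots_iff.1 hγ
  exact R.coroot_int (∑ j, c j).toNat γ c hmem hc hcpos (Int.self_le_toNat _)

lemma corootCoeffs_spec {γ : E} (hγ : γ ∈ R.posRoots) :
    rsCoroot γ = ∑ j, ((R.corootCoeffs (rsCoroot γ)) j : ℝ) • rsCoroot (R.α j) := by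
  have hx : ∃ k : Fin n → ℤ, rsCoroot γ = ∑ j, (k j : ℝ) • rsCoroot (R.α j) :=
    R.coroot_int' hγ
  rw [corootCoeffs, dif_pos hx]
  exact hx.choose_spec

lemma corootCoeffs_nonneg {γ : E} (hγ : γ ∈ R.posRoots) (j : Fin n) :
    0 ≤ R.corootCoeffs (rsCoroot γ) j := by
  obtain ⟨hmem, c, hc, hcpos⟩ := R.mem_posRoots_iff.1 hγ
  have h1 := R.corootCoeffs_spec hγ
  have h2 := R.coroot_real_coords hmem c hc
  have huniq := R.coroot_coords_unique (t := fun j => ((R.corootCoeffs (rsCoroot γ) j : ℝ)))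
    (t' := fun j => ((c j : ℝ) * ⟪R.α j, R.α j⟫ / ⟪γ, γ⟫)) (by rw [← h1, ← h2])
  have h3 := congrFun huniq j
  have hnn : 0 ≤ (c j : ℝ) * ⟪R.α j, R.α j⟫ / ⟪γ, γ⟫ := by
    have := R.inner_root_pos hmem
    have h4 := R.inner_root_pos (R.α_mem j)
    have h5 : (0:ℝ) ≤ (c j : ℝ) := by exact_mod_cast hcpos j
    positivity
  rw [← h3] at hnn
  exact_mod_cast hnn

lemma inner_coroot_alpha (lam : E) (j : Fin n) :
    ⟪lam, rsCoroot (R.α j)⟫ = rsPair lam (R.α j) :=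
  (rsPair_eq_inner_coroot lam (R.α j)).symm

/-- `htI` of the coroot of a positive root equals the pairing with any `I`-weight. -/
lemma htI_eq_pair (I : Finset (Fin n)) (lam : E)
    (hlam : ∀ j, rsPair lam (R.α j) = if j ∈ I then 1 else 0)
    {γ : E} (hγ : γ ∈ R.posRoots) :
    ((R.htI I (rsCoroot γ)) : ℝ) = rsPair lam γ := by
  have hspec := R.corootCoeffs_spec hγ
  set k := R.corootCoeffs (rsCoroot γ) with hk
  have hpair : rsPair lam γ = ∑ j ∈ I, (k j : ℝ) := by
    rw [rsPair_eq_inner_coroot, hspec, inner_sum]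
    have hterm : ∀ j, ⟪lam, (k j : ℝ) • rsCoroot (R.α j)⟫
        = if j ∈ I then (k j : ℝ) else 0 := by
      intro j
      rw [real_inner_smul_right, R.inner_coroot_alpha, hlam j]
      split_ifs <;> ring
    rw [Finset.sum_congr rfl fun j _ => hterm j, Finset.sum_ite_mem, Finset.univ_inter]
  rw [hpair, htI]
  push_cast
  rfl

lemma htI_nonneg (I : Finset (Fin n)) {γ : E} (hγ : γ ∈ R.posRoots) :
    0 ≤ R.htI I (rsCoroot γ) := by
  rw [htI]
  exact Finset.sum_nonneg fun j _ => R.corootCoeffs_nonneg hγ j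

end RootSystemBase
namespace RootSystemBase

variable (R : RootSystemBase n d)

local notation "E" => EuclideanSpace ℝ (Fin d)

/-- The span of the coroots `α_j^∨`, `j ∉ I`. -/
def offSpan (I : Finset (Fin n)) : Submodule ℝ (EuclideanSpace ℝ (Fin d)) :=
  Submodule.span ℝ ((fun j => rsCoroot (R.α j)) '' {j : Fin n | j ∉ I})

lemma inner_eq_zero_of_mem_offSpan (I : Finset (Fin n)) (lam : E)
    (hlam : ∀ j, j ∉ I → ⟪lam, rsCoroot (R.α j)⟫ = 0)
    {x : E} (hx : x ∈ R.offSpan I) : ⟪lam, x⟫ = 0 := by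
  refine Submodule.span_induction ?_ ?_ ?_ ?_ hx
  · rintro y ⟨j, hj, rfl⟩
    exact hlam j hj
  · exact inner_zero_right lam
  · intro y z _ _ hy hz
    rw [inner_add_right, hy, hz, add_zero]
  · intro t y _ hy
    rw [real_inner_smul_right, hy, mul_zero]

lemma mem_offSpan_of_vanish (I : Finset (Fin n)) (k : Fin n → ℤ)
    (hk : ∀ j ∈ I, k j = 0) :
    ∑ j, (k j : ℝ) • rsCoroot (R.α j) ∈ R.offSpan I := by
  refine Submodule.sum_mem _ fun j _ => ?_
  by_cases h : j ∈ I
  · rw [hk j h]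
    simp
  · exact Submodule.smul_mem _ _ (Submodule.subset_span ⟨j, h, rfl⟩)

lemma vanish_of_mem_offSpan (I : Finset (Fin n)) (k : Fin n → ℤ)
    (hmem : ∑ j, (k j : ℝ) • rsCoroot (R.α j) ∈ R.offSpan I) :
    ∀ j ∈ I, k j = 0 := by
  rw [offSpan, Finsupp.mem_span_image_iff_linearCombination] at hmem
  obtain ⟨l, hsupp, hlc⟩ := hmem
  rw [Finsupp.linearCombination_apply] at hlc
  have hlsum : (l.sum fun j a => a • rsCoroot (R.α j))
      = ∑ j, l j • rsCoroot (R.α j) := by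
    apply Finsupp.sum_fintype
    intro j
    simp
  rw [hlsum] at hlc
  have huniq := R.coroot_coords_unique (t := fun j => l j)
    (t' := fun j => ((k j : ℝ))) hlc
  intro j hj
  have h1 : l j = 0 := by
    have := (Finsupp.mem_supported' ℝ l).1 hsupp j (by simp [hj])
    exact this
  have h2 := congrFun huniq j
  rw [h1] at h2
  exact_mod_cast h2.symm

/-- Existence of the weight `λ` with `⟨λ, α_j^∨⟩ = [j ∈ I]`. -/
lemma exists_lam (I : Finset (Fin n)) :
    ∃ lam : E, ∀ j, rsPair lam (R.α j) = if j ∈ I then 1 else 0 := by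
  let T : (Fin n → ℝ) →ₗ[ℝ] (Fin n → ℝ) :=
    { toFun := fun c => fun i => ∑ j, c j * ⟪R.α j, R.α i⟫
      map_add' := by
        intro x y
        funext i
        simp only [Pi.add_apply, ← Finset.sum_add_distrib]
        exact Finset.sum_congr rfl fun j _ => by ring
      map_smul' := by
        intro t x
        funext i
        simp only [Pi.smul_apply, smul_eq_mul, RingHom.id_apply, Finset.mul_sum]
        exact Finset.sum_congr rfl fun j _ => by ring }
  have hTinj : Function.Injective T := by
    rw [← LinearMap.ker_eq_bot, LinearMap.ker_eq_bot']
    intro c hc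
    have hc' : ∀ i, ∑ j, c j * ⟪R.α j, R.α i⟫ = 0 := fun i => congrFun hc i
    have hzero : ∑ j, c j • R.α j = 0 := by
      have hnorm : ⟪∑ j, c j • R.α j, ∑ j, c j • R.α j⟫ = 0 := by
        rw [inner_sum]
        refine Finset.sum_eq_zero fun i _ => ?_
        rw [real_inner_smul_right, sum_inner]
        have : ∀ j, ⟪c j • R.α j, R.α i⟫ = c j * ⟪R.α j, R.α i⟫ := fun j =>
          real_inner_smul_left _ _ _
        rw [Finset.sum_congr rfl fun j _ => this j, hc' i, mul_zero]
      exact (inner_self_eq_zero (𝕜 := ℝ)).1 hnorm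
    have := R.coords_unique (c := c) (c' := fun _ => 0)
      (by rw [hzero]; simp)
    funext i
    exact congrFun this i
  have hTsurj : Function.Surjective T :=
    (LinearMap.injective_iff_surjective_of_finrank_eq_finrank rfl).mp hTinj
  obtain ⟨c, hc⟩ := hTsurj (fun i => (if i ∈ I then 1 else 0) * ⟪R.α i, R.α i⟫ / 2)
  refine ⟨∑ j, c j • R.α j, fun i => ?_⟩
  have hTC : ∑ j, c j * ⟪R.α j, R.α i⟫ = (if i ∈ I then 1 else 0) * ⟪R.α i, R.α i⟫ / 2 :=
    congrFun hc i
  unfold rsPair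
  rw [sum_inner]
  have : ∀ j, ⟪c j • R.α j, R.α i⟫ = c j * ⟪R.α j, R.α i⟫ := fun j =>
    real_inner_smul_left _ _ _
  rw [Finset.sum_congr rfl fun j _ => this j, hTC]
  have hαα := (R.inner_root_pos (R.α_mem i)).ne'
  set A := ⟪R.α i, R.α i⟫
  split_ifs with h
  · field_simp
  · simp

end RootSystemBase
namespace RootSystemBase

variable (R : RootSystemBase n d)

local notation "E" => EuclideanSpace ℝ (Fin d)

@[simp] lemma validFrom_nil (I : Finset (Fin n)) (c : Fin n → ℤ) :
    R.ValidFrom I c [] := trivial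

lemma validFrom_cons (I : Finset (Fin n)) (c : Fin n → ℤ) (v : Fin n) (l : List (Fin n)) :
    R.ValidFrom I c (v :: l) ↔ R.Sad I c v ∧ R.ValidFrom I (R.fire I c v) l :=
  Iff.rfl

lemma validFrom_append_singleton (I : Finset (Fin n)) :
    ∀ (l : List (Fin n)) (c : Fin n → ℤ) (v : Fin n),
      R.ValidFrom I c (l ++ [v]) ↔
        R.ValidFrom I c l ∧ R.Sad I (l.foldl (R.fire I) c) v := by
  intro l
  induction l with
  | nil =>
      intro c v
      simp only [List.nil_append, List.foldl_nil]
      rw [R.validFrom_cons]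
      simp
  | cons i l ih =>
      intro c v
      rw [List.cons_append, R.validFrom_cons, ih, R.validFrom_cons, List.foldl_cons]
      tauto

lemma play_nil (I : Finset (Fin n)) : R.play I [] = 0 := rfl

lemma play_append_singleton (I : Finset (Fin n)) (l : List (Fin n)) (v : Fin n) :
    R.play I (l ++ [v]) = R.fire I (R.play I l) v := by
  rw [play, play, List.foldl_append]
  rfl

lemma valid_append_singleton (I : Finset (Fin n)) (l : List (Fin n)) (v : Fin n) :
    R.Valid I (l ++ [v]) ↔ R.Valid I l ∧ R.Sad I (R.play I l) v :=
  R.validFrom_append_singleton I l 0 v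

lemma seqProd_eq_wordProd (l : List (Fin n)) : R.seqProd l = R.wordProd l.reverse := rfl

lemma seqProd_append_singleton (l : List (Fin n)) (v : Fin n) :
    R.seqProd (l ++ [v]) = R.sRefl v * R.seqProd l := by
  rw [R.seqProd_eq_wordProd, R.seqProd_eq_wordProd, List.reverse_append]
  simp only [List.reverse_cons, List.reverse_nil, List.nil_append, List.singleton_append]
  rw [R.wordProd_cons]

lemma cartan_real (u v : Fin n) : ((R.cartan u v : ℤ) : ℝ) = rsPair (R.α u) (R.α v) := by
  obtain ⟨k, hk⟩ := R.crystallographic (R.α u) (R.α_mem u) (R.α v) (R.α_mem v)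
  rw [cartan, hk, Int.floor_intCast]

lemma cartan_diag (v : Fin n) : R.cartan v v = 2 := by
  rw [cartan, R.rsPair_self (R.α_mem v)]
  norm_num

/-- The key identity between the chip bound and the root-system pairing. -/
lemma chip_key (I : Finset (Fin n)) (lam : E)
    (hlam : ∀ j, rsPair lam (R.α j) = if j ∈ I then 1 else 0)
    (c : Fin n → ℤ) (v : Fin n) :
    ((R.chipBound I c v : ℤ) : ℝ) - 2 * (c v : ℝ)
      = rsPair (lam - ∑ u, (c u : ℝ) • R.α u) (R.α v) := by
  have hx : rsPair (∑ u, (c u : ℝ) • R.α u) (R.α v)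
      = ∑ u, (c u : ℝ) * rsPair (R.α u) (R.α v) := by
    rw [rsPair_sum_left]
    exact Finset.sum_congr rfl fun u _ => rsPair_smul_left _ _ _
  have hfull : ∑ u ∈ Finset.univ.erase v, (-(R.cartan u v) * c u : ℤ)
      = (∑ u, -(R.cartan u v) * c u) - (-(R.cartan v v) * c v) := by
    rw [eq_sub_iff_add_eq]
    exact Finset.sum_erase_add _ _ (Finset.mem_univ v)
  rw [chipBound, hfull]
  rw [rsPair_sub_left, hlam v, hx, R.cartan_diag]
  have : ∀ u, (c u : ℝ) * rsPair (R.α u) (R.α v) = -(-((R.cartan u v : ℤ) : ℝ) * c u) := by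
    intro u
    rw [R.cartan_real]
    ring
  rw [Finset.sum_congr rfl fun u _ => this u, Finset.sum_neg_distrib]
  push_cast
  ring

/-- Sadness in terms of the pairing. -/
lemma sad_iff (I : Finset (Fin n)) (lam : E)
    (hlam : ∀ j, rsPair lam (R.α j) = if j ∈ I then 1 else 0)
    (c : Fin n → ℤ) (v : Fin n) :
    R.Sad I c v ↔ 0 < rsPair (lam - ∑ u, (c u : ℝ) • R.α u) (R.α v) := by
  rw [Sad, ← R.chip_key I lam hlam c v]
  constructor
  · intro h
    have h' : ((2 * c v : ℤ) : ℝ) < ((R.chipBound I c v : ℤ) : ℝ) := by exact_mod_cast h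
    push_cast at h'
    linarith
  · intro h
    have h' : ((2 * c v : ℤ) : ℝ) < ((R.chipBound I c v : ℤ) : ℝ) := by push_cast; linarith
    exact_mod_cast h'

/-- Inserting a new inversion when firing a sad vertex. -/
lemma filter_insert_of_new (m : List (Fin n)) (v : Fin n)
    (hγ₁ : (R.wordProd m).symm (R.α v) ∈ R.posRoots) :
    R.posRoots.filter (fun γ => (R.sRefl v * R.wordProd m) γ ∉ R.posRoots)
      = insert ((R.wordProd m).symm (R.α v))
          (R.posRoots.filter (fun γ => R.wordProd m γ ∉ R.posRoots)) ∧
    (R.wordProd m).symm (R.α v) ∉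
      R.posRoots.filter (fun γ => R.wordProd m γ ∉ R.posRoots) := by
  set u := R.wordProd m with hu
  set γ₁ : E := u.symm (R.α v) with hγ₁def
  have huγ₁ : u γ₁ = R.α v := u.apply_symm_apply _
  constructor
  · ext γ
    rw [Finset.mem_insert, Finset.mem_filter, Finset.mem_filter]
    constructor
    · rintro ⟨hγ, hbad⟩
      rw [mul_apply] at hbad
      by_cases hc1 : u γ ∈ R.posRoots
      · left
        have := R.eq_alpha_of_flip hc1 v hbad
        rw [hγ₁def, ← this, u.symm_apply_apply]
      · right; exact ⟨hγ, hc1⟩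
    · intro hcase
      rcases hcase with rfl | ⟨hγ, hbad⟩
      · refine ⟨hγ₁, ?_⟩
        rw [mul_apply, huγ₁]
        rw [R.sRefl_alpha]
        intro hcon
        exact R.not_pos_and_neg (R.alpha_pos v) hcon
      · refine ⟨hγ, ?_⟩
        rw [mul_apply]
        intro hcon2
        have hγroot : γ ∈ R.Φ := R.posRoots_mem hγ
        have huγroot : u γ ∈ R.Φ := by
          rw [hu]
          exact R.wordProd_mem hγroot m
        have hnegpos : -(u γ) ∈ R.posRoots := R.pos_of_not_pos huγroot hbad
        by_cases hc2 : -(u γ) = R.α v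
        · have hγeq : γ = -γ₁ := by
            apply u.injective
            rw [map_neg, huγ₁, ← hc2]
            abel
          rw [hγeq] at hγ
          exact R.not_pos_and_neg hγ₁ hγ
        · have : R.sRefl v (-(u γ)) ∈ R.posRoots := R.sRefl_pos hnegpos v hc2
          rw [map_neg] at this
          exact R.not_pos_and_neg hcon2 this
  · rw [Finset.mem_filter]
    rintro ⟨-, hbad⟩
    rw [huγ₁] at hbad
    exact hbad (R.alpha_pos v)

/-- The main invariant of the modified Kostant game. -/
lemma invariant (I : Finset (Fin n)) (lam : E)
    (hlam : ∀ j, rsPair lam (R.α j) = if j ∈ I then 1 else 0) :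
    ∀ l : List (Fin n), R.Valid I l →
      ((∑ u, ((R.play I l u : ℤ) : ℝ) • R.α u) = lam - R.seqProd l lam)
      ∧ ((R.posRoots.filter fun γ => R.seqProd l γ ∉ R.posRoots).card = l.length)
      ∧ ((((∑ v, R.play I l v) : ℤ) : ℝ)
          = ∑ γ ∈ R.posRoots.filter (fun γ => R.seqProd l γ ∉ R.posRoots), rsPair lam γ) := by
  have hdom : ∀ i, 0 ≤ rsPair lam (R.α i) := by
    intro i
    rw [hlam i]
    split_ifs <;> norm_num
  intro l
  induction l using List.reverseRecOn with
  | nil =>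
      intro _
      have h1 : R.seqProd [] = 1 := rfl
      have hfe : R.posRoots.filter (fun γ => R.seqProd [] γ ∉ R.posRoots) = ∅ := by
        rw [Finset.filter_eq_empty_iff]
        intro γ hγ
        rw [h1]
        exact fun hcon => hcon hγ
      refine ⟨?_, ?_, ?_⟩
      · rw [R.play_nil, h1]
        simp
      · rw [hfe]; rfl
      · rw [R.play_nil, hfe]
        simp
  | append_singleton l v ih =>
      intro hvalid
      rw [R.valid_append_singleton] at hvalid
      obtain ⟨hval, hsad⟩ := hvalid
      obtain ⟨ha, hb, hc⟩ := ih hval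
      set c := R.play I l with hcdef
      set w := R.seqProd l with hwdef
      -- sadness in pairing form
      have hsadp : 0 < rsPair (w lam) (R.α v) := by
        rw [R.sad_iff I lam hlam] at hsad
        rwa [ha, sub_sub_cancel] at hsad
      -- the new inversion root
      have hwword : w = R.wordProd l.reverse := R.seqProd_eq_wordProd l
      have hγ₁root : w.symm (R.α v) ∈ R.Φ := by
        have : R.wordProd l.reverse.reverse (R.α v) ∈ R.Φ :=
          R.wordProd_mem (R.α_mem v) l.reverse.reverse
        rw [← R.symm_wordProd, ← hwword] at this
        exact this
      have hpair₁ : rsPair lam (w.symm (R.α v)) = rsPair (w lam) (R.α v) := by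
        conv_rhs => rw [← w.apply_symm_apply (R.α v)]
        rw [hwword, R.wordProd_rsPair]
      have hγ₁pos : w.symm (R.α v) ∈ R.posRoots := by
        by_contra hcon
        have hneg : -(w.symm (R.α v)) ∈ R.posRoots := R.pos_of_not_pos hγ₁root hcon
        have := R.pair_nonneg_of_dominant hdom hneg
        rw [rsPair_neg_right] at this
        rw [← hpair₁] at hsadp
        linarith
      -- new word
      have hw' : R.seqProd (l ++ [v]) = R.sRefl v * w := R.seqProd_append_singleton l v
      have hins := R.filter_insert_of_new l.reverse v (by rw [← hwword]; exact hγ₁pos)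
      rw [← hwword] at hins
      obtain ⟨hseteq, hnotmem⟩ := hins
      -- play update
      have hplay : R.play I (l ++ [v]) = R.fire I c v := R.play_append_singleton I l v
      have hplayv : R.play I (l ++ [v]) v = R.chipBound I c v - c v := by
        rw [hplay, fire, Function.update_self]
      have hplayu : ∀ u, u ≠ v → R.play I (l ++ [v]) u = c u := by
        intro u hu
        rw [hplay, fire, Function.update_of_ne hu]
      -- (a)
      have hvec : ∑ u, ((R.play I (l ++ [v]) u : ℤ) : ℝ) • R.α u
          = (∑ u, ((c u : ℤ) : ℝ) • R.α u)
            + (((R.chipBound I c v - 2 * c v : ℤ)) :ℝ) • R.α v := by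
        have hsplit : ∀ u : Fin n, ((R.play I (l ++ [v]) u : ℤ) : ℝ) • R.α u
            = ((c u : ℤ) : ℝ) • R.α u
              + (if u = v then (((R.chipBound I c v - 2 * c v : ℤ)) : ℝ) else 0) • R.α u := by
          intro u
          by_cases hu : u = v
          · subst hu
            rw [if_pos rfl, hplayv, ← add_smul]
            congr 1
            push_cast
            ring
          · rw [if_neg hu, hplayu u hu, zero_smul, add_zero]
        rw [Finset.sum_congr rfl fun u _ => hsplit u, Finset.sum_add_distrib]
        congr 1
        rw [Finset.sum_eq_single v]
        · rw [if_pos rfl]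
        · intro b _ hb; rw [if_neg hb, zero_smul]
        · intro hcon; exact absurd (Finset.mem_univ v) hcon
      have hkey : (((R.chipBound I c v - 2 * c v : ℤ)) : ℝ) = rsPair (w lam) (R.α v) := by
        have h2 := R.chip_key I lam hlam c v
        rw [ha, sub_sub_cancel] at h2
        push_cast
        linarith
      refine ⟨?_, ?_, ?_⟩
      · -- (a)
        rw [hvec, ha, hkey, hw', mul_apply, R.sRefl_apply]
        abel
      · -- (b)
        simp only [hw']
        rw [hseteq, Finset.card_insert_of_notMem hnotmem, hb]
        rw [List.length_append]
        rfl
      · -- (c)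
        have hsum : (∑ u, R.play I (l ++ [v]) u)
            = (∑ u, c u) + (R.chipBound I c v - 2 * c v) := by
          have hsplit : ∀ u : Fin n, R.play I (l ++ [v]) u
              = c u + (if u = v then (R.chipBound I c v - 2 * c v) else 0) := by
            intro u
            by_cases hu : u = v
            · subst hu
              rw [if_pos rfl, hplayv]
              ring
            · rw [if_neg hu, hplayu u hu, add_zero]
          rw [Finset.sum_congr rfl fun u _ => hsplit u, Finset.sum_add_distrib]
          congr 1
          rw [Finset.sum_eq_single v]
          · rw [if_pos rfl]
          · intro b _ hb'; rw [if_neg hb']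
          · intro hcon; exact absurd (Finset.mem_univ v) hcon
        simp only [hw']
        rw [hseteq, Finset.sum_insert hnotmem, hsum, Int.cast_add, hc, hkey, hpair₁]
        ring

end RootSystemBase
namespace RootSystemBase

variable (R : RootSystemBase n d)

local notation "E" => EuclideanSpace ℝ (Fin d)

lemma wordProd_mul_reverse (l : List (Fin n)) :
    R.wordProd l * R.wordProd l.reverse = 1 := by
  have h := R.wordProd_reverse l.reverse
  rwa [List.reverse_reverse] at h

/-- Antidominance of the final weight. -/
lemma maximal_antidominant (I : Finset (Fin n)) (lam : E)
    (hlam : ∀ j, rsPair lam (R.α j) = if j ∈ I then 1 else 0)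
    {l : List (Fin n)} (hmax : R.MaximalSeq I l) :
    ∀ i, rsPair (R.seqProd l lam) (R.α i) ≤ 0 := by
  intro i
  have hns := hmax.2 i
  rw [R.sad_iff I lam hlam _ i] at hns
  rw [(R.invariant I lam hlam l hmax.1).1, sub_sub_cancel] at hns
  exact not_lt.1 hns

/-- Uniqueness of the final weight, hence of the final configuration. -/
lemma maximal_play_eq (I : Finset (Fin n)) (lam : E)
    (hlam : ∀ j, rsPair lam (R.α j) = if j ∈ I then 1 else 0)
    {l l' : List (Fin n)} (hmax : R.MaximalSeq I l) (hmax' : R.MaximalSeq I l') :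
    R.play I l = R.play I l' := by
  have key : ∀ (a b : List (Fin n)), R.MaximalSeq I a → R.MaximalSeq I b →
      R.InCone (R.seqProd b lam - R.seqProd a lam) := by
    intro a b hma hmb
    have hdomD : ∀ i, 0 ≤ rsPair (-(R.seqProd a lam)) (R.α i) := by
      intro i
      rw [rsPair_neg_left]
      have := R.maximal_antidominant I lam hlam hma i
      linarith
    have hcone := R.dominant_cone (-(R.seqProd a lam)) hdomD
      (R.nuW (R.wordProd (b.reverse ++ a))) (b.reverse ++ a) le_rfl
    have hkey : R.wordProd (b.reverse ++ a) (R.seqProd a lam) = R.seqProd b lam := by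
      rw [R.wordProd_append, mul_apply]
      have h1 : R.wordProd a (R.seqProd a lam) = lam := by
        have h2 := R.wordProd_mul_reverse a
        have h3 : (R.wordProd a * R.wordProd a.reverse) lam = lam := by rw [h2]; rfl
        rw [mul_apply] at h3
        exact h3
      rw [h1, R.seqProd_eq_wordProd b]
    rw [map_neg, hkey] at hcone
    have heq : -(R.seqProd a lam) - -(R.seqProd b lam)
        = R.seqProd b lam - R.seqProd a lam := by abel
    rwa [heq] at hcone
  have h1 := key l l' hmax hmax'
  have h2 := key l' l hmax' hmax
  have heq0 : R.seqProd l' lam - R.seqProd l lam = 0 := by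
    apply R.inCone_antisymm h1
    rw [neg_sub]
    exact h2
  have hw : R.seqProd l lam = R.seqProd l' lam := by
    have := sub_eq_zero.1 heq0
    exact this.symm
  have ha := (R.invariant I lam hlam l hmax.1).1
  have ha' := (R.invariant I lam hlam l' hmax'.1).1
  have hvec : ∑ u, ((R.play I l u : ℤ) : ℝ) • R.α u
      = ∑ u, ((R.play I l' u : ℤ) : ℝ) • R.α u := by
    rw [ha, ha', hw]
  have := R.coords_unique hvec
  funext u
  have h3 := congrFun this u
  exact_mod_cast h3

/-- The final chip count formula for a maximal sequence. -/
lemma maximal_sum (I : Finset (Fin n)) (lam : E)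
    (hlam : ∀ j, rsPair lam (R.α j) = if j ∈ I then 1 else 0)
    {l : List (Fin n)} (hmax : R.MaximalSeq I l) :
    ∑ v, R.play I l v
      = ∑ γ ∈ R.posRoots.filter (fun γ => rsCoroot γ ∉ R.offSpan I),
          R.htI I (rsCoroot γ) := by
  have hdom : ∀ i, 0 ≤ rsPair lam (R.α i) := by
    intro i
    rw [hlam i]
    split_ifs <;> norm_num
  obtain ⟨ha, hb, hc⟩ := R.invariant I lam hlam l hmax.1
  -- Step 1: extend the sum over the inversion set to all positive roots
  have hstep1 : ∑ γ ∈ R.posRoots.filter (fun γ => R.seqProd l γ ∉ R.posRoots),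
      rsPair lam γ = ∑ γ ∈ R.posRoots, rsPair lam γ := by
    apply Finset.sum_subset (Finset.filter_subset _ _)
    intro γ hγ hnγ
    rw [Finset.mem_filter, not_and] at hnγ
    have hwγpos : R.seqProd l γ ∈ R.posRoots := not_not.1 (hnγ hγ)
    have hle : rsPair lam γ ≤ 0 := by
      have hpair : rsPair lam γ = rsPair (R.seqProd l lam) (R.seqProd l γ) := by
        rw [R.seqProd_eq_wordProd, R.wordProd_rsPair]
      have hdomD : ∀ i, 0 ≤ rsPair (-(R.seqProd l lam)) (R.α i) := by
        intro i
        rw [rsPair_neg_left]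
        have := R.maximal_antidominant I lam hlam hmax i
        linarith
      have := R.pair_nonneg_of_dominant hdomD hwγpos
      rw [rsPair_neg_left] at this
      linarith [hpair ▸ (by linarith : -(rsPair (R.seqProd l lam) (R.seqProd l γ)) ≥ 0)]
    have hge : 0 ≤ rsPair lam γ := R.pair_nonneg_of_dominant hdom hγ
    linarith
  -- Step 2: restrict to positive roots whose coroot is outside the off-span
  have hstep2 : ∑ γ ∈ R.posRoots.filter (fun γ => rsCoroot γ ∉ R.offSpan I),
      rsPair lam γ = ∑ γ ∈ R.posRoots, rsPair lam γ := by
    apply Finset.sum_subset (Finset.filter_subset _ _)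
    intro γ hγ hnγ
    rw [Finset.mem_filter, not_and] at hnγ
    have hmemspan : rsCoroot γ ∈ R.offSpan I := not_not.1 (hnγ hγ)
    rw [rsPair_eq_inner_coroot]
    apply R.inner_eq_zero_of_mem_offSpan I lam _ hmemspan
    intro j hj
    rw [R.inner_coroot_alpha, hlam j, if_neg hj]
  -- Step 3: identify terms with htI
  have hstep3 : ∑ γ ∈ R.posRoots.filter (fun γ => rsCoroot γ ∉ R.offSpan I),
      rsPair lam γ
      = ((∑ γ ∈ R.posRoots.filter (fun γ => rsCoroot γ ∉ R.offSpan I),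
          R.htI I (rsCoroot γ) : ℤ) : ℝ) := by
    push_cast
    refine Finset.sum_congr rfl fun γ hγ => ?_
    have hγpos : γ ∈ R.posRoots := Finset.mem_filter.1 hγ |>.1
    exact (R.htI_eq_pair I lam hlam hγpos).symm
  have : ((∑ v, R.play I l v : ℤ) : ℝ)
      = ((∑ γ ∈ R.posRoots.filter (fun γ => rsCoroot γ ∉ R.offSpan I),
          R.htI I (rsCoroot γ) : ℤ) : ℝ) := by
    rw [hc, hstep1, ← hstep2, hstep3]
  exact_mod_cast this

end RootSystemBase
/-- Root counting identity. The Modified Kostant Game with active set `I`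
terminates in a unique final configuration, and the total number of chips of this final
configuration equals the sum of the `I`-heights of all positive coroots not lying in the
coroot subsystem generated by `{α_j^∨ : j ∉ I}`. -/
theorem statement4 {n d : ℕ} (R : RootSystemBase n d) (I : Finset (Fin n)) :
    (∃ N : ℕ, ∀ l : List (Fin n), R.Valid I l → l.length ≤ N) ∧
    ∃ cfin : Fin n → ℤ,
      (∃ l : List (Fin n), R.MaximalSeq I l) ∧
      (∀ l : List (Fin n), R.MaximalSeq I l → R.play I l = cfin) ∧
      ∑ v, cfin v =
        ∑ γ ∈ R.posRoots.filter (fun γ => rsCoroot γ ∉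
            Submodule.span ℝ ((fun j => rsCoroot (R.α j)) '' {j : Fin n | j ∉ I})),
          R.htI I (rsCoroot γ) := by
  obtain ⟨lam, hlam⟩ := R.exists_lam I
  have hterm : ∀ l, R.Valid I l → l.length ≤ R.posRoots.card := by
    intro l hv
    have hb := (R.invariant I lam hlam l hv).2.1
    rw [← hb]
    exact Finset.card_filter_le _ _
  have hexists : ∃ l, R.MaximalSeq I l := by
    by_contra hno
    push_neg at hno
    have hgrow : ∀ k : ℕ, ∃ l, R.Valid I l ∧ l.length = k := by
      intro k
      induction k with
      | zero => exact ⟨[], trivial, rfl⟩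
      | succ k ihk =>
          obtain ⟨l, hv, hlen⟩ := ihk
          have hnm : ¬ (R.Valid I l ∧ ∀ v, ¬ R.Sad I (R.play I l) v) := hno l
          push_neg at hnm
          obtain ⟨v, hsadv⟩ := hnm hv
          exact ⟨l ++ [v], (R.valid_append_singleton I l v).2 ⟨hv, hsadv⟩, by simp [hlen]⟩
    obtain ⟨l, hv, hlen⟩ := hgrow (R.posRoots.card + 1)
    have := hterm l hv
    omega
  obtain ⟨l₀, hl₀⟩ := hexists
  refine ⟨⟨R.posRoots.card, hterm⟩, R.play I l₀, ⟨l₀, hl₀⟩, ?_, ?_⟩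
  · intro l hl
    exact R.maximal_play_eq I lam hlam hl hl₀
  · exact R.maximal_sum I lam hlam hl₀
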